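/- arXiv:1510.00640 — 3 statements merged into one kernel-verified Lean document; each statement's English description precedes it below -/
import Mathlib

section
/- Let R be a commutative ring, A a commutative (not necessarily associative) R-algebra, and Φ a finite set of eigenvalues with Seress fusion rules (i.e. 1⋆φ ⊆ {φ} and 0⋆φ ⊆ {φ} for all φ ∈ Φ). If a ∈ A is a Φ-axis, then for any x ∈ A and any z in the sum of the 1- and 0-eigenspaces of ad(a), one has a(xz) = (ax)z. -/
/-- The (left-)adjoint map of `a`, `x ↦ a * x`, as a linear endomorphism. -/
def adMap (R : Type*) (A : Type*) [CommRing R] [NonUnitalNonAssocCommRing A]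
    [Module R A] [SMulCommClass R A A] [IsScalarTower R A A] (a : A) :
    Module.End R A := LinearMap.mul R A a

/-- `a` is a `Φ`-axis for the fusion rules `star` on the eigenvalue set `Φ`:
a primitive idempotent whose adjoint map is diagonalisable with eigenvalues in `Φ`,
the eigenspaces multiplying according to the fusion rules. -/
def IsAxis (R : Type*) (A : Type*) [CommRing R] [NonUnitalNonAssocCommRing A]
    [Module R A] [SMulCommClass R A A] [IsScalarTower R A A]
    (Φ : Finset R) (star : R → R → Set R) (a : A) : Prop :=
  a * a = a ∧
  Module.End.eigenspace (adMap R A a) 1 = Submodule.span R {a} ∧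
  (⨆ μ ∈ Φ, Module.End.eigenspace (adMap R A a) μ) = ⊤ ∧
  ∀ μ ∈ Φ, ∀ ν ∈ Φ, ∀ x ∈ Module.End.eigenspace (adMap R A a) μ,
    ∀ y ∈ Module.End.eigenspace (adMap R A a) ν,
      x * y ∈ ⨆ γ ∈ star μ ν, Module.End.eigenspace (adMap R A a) γ

/-- If the fusion rules are Seress (`1⋆φ ⊆ {φ} ⊇ 0⋆φ` for all `φ ∈ Φ`) and `a` is a
`Φ`-axis, then `a(xz) = (ax)z` for all `x ∈ A` and `z` in the sum of the `1`- and
`0`-eigenspaces of `ad(a)`. -/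
theorem seress_associativity
    (R : Type*) (A : Type*) [CommRing R] [NonUnitalNonAssocCommRing A]
    [Module R A] [SMulCommClass R A A] [IsScalarTower R A A]
    (Φ : Finset R) (star : R → R → Set R)
    (h1 : (1 : R) ∈ Φ) (h0 : (0 : R) ∈ Φ)
    (hSeress : ∀ φ ∈ Φ, star 1 φ ⊆ {φ} ∧ star 0 φ ⊆ {φ})
    (a : A) (ha : IsAxis R A Φ star a) :
    ∀ x z : A,
      z ∈ Module.End.eigenspace (adMap R A a) 1 ⊔ Module.End.eigenspace (adMap R A a) 0 →
      a * (x * z) = (a * x) * z := by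
  obtain ⟨hid, hone, htop, hfus⟩ := ha
  set E : R → Submodule R A := fun μ => Module.End.eigenspace (adMap R A a) μ with hE
  have hmem : ∀ μ : R, ∀ w : A, w ∈ E μ ↔ a * w = μ • w := by
    intro μ w
    rw [hE]
    simp [Module.End.mem_eigenspace_iff, adMap, LinearMap.mul_apply']
  -- key step: for ν ∈ Φ with star ν φ ⊆ {φ}, z ∈ E ν, any x
  have step : ∀ ν, ν ∈ Φ → (∀ φ ∈ Φ, star ν φ ⊆ {φ}) →
      ∀ z, z ∈ E ν → ∀ x : A, a * (x * z) = (a * x) * z := by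
    intro ν hν hsub z hz x
    have htop' : (⨆ μ : Φ, E μ) = ⊤ := by rw [← htop, iSup_subtype']
    have hxtop : x ∈ ⨆ μ : Φ, E μ := by rw [htop']; trivial
    refine Submodule.iSup_induction (motive := fun x => a * (x * z) = (a * x) * z) _ hxtop
      ?_ ?_ ?_
    · rintro ⟨μ, hμ⟩ x hx
      have hax : a * x = μ • x := (hmem μ x).mp hx
      have hzx : z * x ∈ ⨆ γ ∈ star ν μ, E γ := hfus ν hν μ hμ z hz x hx
      have hle : (⨆ γ ∈ star ν μ, E γ) ≤ E μ := by
        refine iSup₂_le fun γ hγ => ?_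
        have : γ = μ := hsub μ hμ hγ
        subst this; exact le_rfl
      have hxz : x * z ∈ E μ := by rw [mul_comm]; exact hle hzx
      rw [(hmem μ (x * z)).mp hxz, hax, smul_mul_assoc]
    · simp
    · intro x y hx hy
      rw [add_mul x y z, mul_add, hx, hy, mul_add a x y, add_mul]
  intro x z hz
  obtain ⟨z1, hz1, z0, hz0, rfl⟩ := Submodule.mem_sup.mp hz
  rw [mul_add, mul_add, mul_add,
    step 1 h1 (fun φ hφ => (hSeress φ hφ).1) z1 hz1 x,
    step 0 h0 (fun φ hφ => (hSeress φ hφ).2) z0 hz0 x]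
end

section
/- Let a be a Φ(α,β)-axis in a commutative algebra A over a ring containing 1/2, and let x ∈ A. Then a(a ∘ x) = (α−β)(a ∘ x) + (λ^a(x)(1−α) + β(α−β−1))a + (α−β)β x_+, where x ∘ y = xy − β(x+y) and x_+ is the projection of x onto the sum of the 1-, 0-, and α-eigenspaces of ad(a). -/
/-- For a `Φ(α,β)`-axis `a`, with `x ∘ y = xy - β(x+y)` and `x₊` the projection of `x`
onto the sum of the `1`-, `0`- and `α`-eigenspaces of `ad(a)`, one has
`a(a ∘ x) = (α-β)(a ∘ x) + (λ^a(x)(1-α) + β(α-β-1))a + (α-β)β·x₊`. -/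
theorem a_mul_a_circ_x
    (R : Type*) (A : Type*) [CommRing R] [NonUnitalNonAssocCommRing A]
    [Module R A] [SMulCommClass R A A] [IsScalarTower R A A]
    [Invertible (2 : R)]
    (α β : R) (a : A) (ha : a * a = a)
    (x x₀ xα xβ : A) (lam : R)
    (hx : x = lam • a + x₀ + xα + xβ)
    (h0 : a * x₀ = 0) (hα : a * xα = α • xα) (hβ : a * xβ = β • xβ) :
    a * (a * x - β • (a + x)) =
      (α - β) • (a * x - β • (a + x)) + (lam * (1 - α) + β * (α - β - 1)) • a +
        ((α - β) * β) • (lam • a + x₀ + xα) := by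
  subst hx
  simp only [mul_add, mul_sub, mul_smul_comm, ha, h0, hα, hβ, smul_add, smul_smul, mul_zero,
    smul_zero]
  module
end

section
/- The symmetric bilinear form on the 6-dimensional algebra 5A_α defined by (a_i, a_i) = 1, (a_i, a_j) = (3/32)(5α−1) for i ≠ j, (a_i, s) = λ(1−β) − β with λ = 3(5α−1)/32 and β = (5α−1)/8, extended compatibly to s, has Gram matrix with determinant −(5^6 / 2^36)(3α−7)^5 (3α+1)^2 (5α−1), and is positive definite exactly when 1/5 < α < 7/3. -/
noncomputable section

/-- Index type for the basis `a₋₂, a₋₁, a₀, a₁, a₂` (as `some i`, `i : ZMod 5`) and `s`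
(as `none`) of the algebra `5A_α`. -/
abbrev I5 : Type := Option (ZMod 5)

/-- Basis vectors. -/
def e5 (F : Type*) [Field F] (k : I5) : I5 → F := Pi.single k 1

open scoped Classical in
/-- Structure constants of `5A_α`:  `T5 α i j` is the product of the `i`-th and `j`-th
basis vectors.  Here `β = (5α-1)/8`, `s = a₀∘a₁`, and indices are mod 5. -/
def T5 (F : Type*) [Field F] (α : F) : I5 → I5 → (I5 → F) :=
  fun i j =>
    match i, j with
    | some i, some j =>
        if i = j then e5 F (some i)
        else if j - i = 1 ∨ j - i = 4 then
          ((5 * α - 1) / 8) • (e5 F (some i) + e5 F (some j)) + e5 F none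
        else
          ((5 * α - 1) / 16) •
            (2 • (e5 F (some i) + e5 F (some j)) - ∑ k : ZMod 5, e5 F (some k))
            - e5 F none
    | some i, none =>
        ((1 - 5 * α) * (1 + 3 * α) / 64) • e5 F (some i)
          - ((1 + 3 * α) * (1 - 5 * α) / 128) • (e5 F (some (i - 1)) + e5 F (some (i + 1)))
          + ((1 + 3 * α) / 8) • e5 F none
    | none, some j =>
        ((1 - 5 * α) * (1 + 3 * α) / 64) • e5 F (some j)
          - ((1 + 3 * α) * (1 - 5 * α) / 128) • (e5 F (some (j - 1)) + e5 F (some (j + 1)))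
          + ((1 + 3 * α) / 8) • e5 F none
    | none, none =>
        ((7 * α - 3) * (1 + 3 * α) * (1 - 5 * α) / 2048) • (∑ k : ZMod 5, e5 F (some k))
          + (5 * (1 - 5 * α) * (1 + 3 * α) / 128) • e5 F none

/-- The bilinear multiplication of `5A_α`. -/
def mul5 (F : Type*) [Field F] (α : F) :
    (I5 → F) →ₗ[F] (I5 → F) →ₗ[F] (I5 → F) :=
  LinearMap.mk₂ F (fun x y => ∑ i : I5, ∑ j : I5, (x i * y j) • T5 F α i j)
    (fun x x' y => by simp [add_mul, add_smul, Finset.sum_add_distrib])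
    (fun c x y => by simp [Finset.smul_sum, smul_smul, mul_assoc])
    (fun x y y' => by simp [mul_add, add_smul, Finset.sum_add_distrib])
    (fun c x y => by simp [Finset.smul_sum, smul_smul, mul_left_comm])



lemma sum_zmod5' {M : Type*} [AddCommMonoid M] (f : ZMod 5 → M) :
    ∑ i, f i = f 0 + f 1 + f 2 + f 3 + f 4 := by
  rw [show (Finset.univ : Finset (ZMod 5)) = ({0,1,2,3,4} : Finset (ZMod 5)) from by decide]
  rw [Finset.sum_insert (by decide), Finset.sum_insert (by decide),
    Finset.sum_insert (by decide), Finset.sum_insert (by decide), Finset.sum_singleton]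
  abel

lemma sum_I5' {M : Type*} [AddCommMonoid M] (f : I5 → M) :
    ∑ i, f i = f none + (f (some 0) + f (some 1) + f (some 2) + f (some 3) + f (some 4)) := by
  rw [Fintype.sum_option, sum_zmod5']

lemma e5_apply' (F : Type*) [Field F] (k j : I5) : e5 F k j = if j = k then 1 else 0 := by
  simp [e5, Pi.single_apply]

lemma mul5_basis (F : Type*) [Field F] (α : F) (a b : I5) :
    mul5 F α (e5 F a) (e5 F b) = T5 F α a b := by
  show ∑ i : I5, ∑ j : I5, (e5 F a i * e5 F b j) • T5 F α i j = T5 F α a b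
  rw [Finset.sum_eq_single a]
  · rw [Finset.sum_eq_single b]
    · simp [e5_apply']
    · intro j _ hj; simp [e5_apply', hj]
    · simp
  · intro i _ hi; simp [e5_apply', hi]
  · simp

lemma decomp5 (F : Type*) [Field F] (x : I5 → F) : x = ∑ k : I5, x k • e5 F k := by
  funext j
  simp [e5_apply', Finset.sum_apply, Finset.sum_ite_eq]

@[simp] lemma cons_val_five' {β : Type*} (x : β) (u : Fin 5 → β) :
    Matrix.vecCons x u 5 = u 4 := rfl

def eqv5 : I5 ≃ Fin 6 where
  toFun k := k.elim 5 (fun i => ⟨i.val, Nat.lt_trans (ZMod.val_lt i) (by norm_num)⟩)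
  invFun j := if h : (j : ℕ) < 5 then some ⟨(j : ℕ), h⟩ else none
  left_inv := by decide
  right_inv := by decide

@[simp] lemma eqv5_none : eqv5 none = 5 := rfl
@[simp] lemma eqv5_s0 : eqv5 (some 0) = 0 := rfl
@[simp] lemma eqv5_s1 : eqv5 (some 1) = 1 := rfl
@[simp] lemma eqv5_s2 : eqv5 (some 2) = 2 := rfl
@[simp] lemma eqv5_s3 : eqv5 (some 3) = 3 := rfl
@[simp] lemma eqv5_s4 : eqv5 (some 4) = 4 := rfl

open Matrix in
set_option maxHeartbeats 1000000 in
set_option maxRecDepth 10000 in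
lemma det6' (c d e : ℝ) :
    (Matrix.det !![1,c,c,c,c,d; c,1,c,c,c,d; c,c,1,c,c,d; c,c,c,1,c,d; c,c,c,c,1,d; d,d,d,d,d,e])
      = (1 - c) ^ 4 * ((1 + 4 * c) * e - 5 * d ^ 2) := by
  simp only [det_succ_row_zero, Fin.sum_univ_succ, det_unique, Fin.default_eq_zero,
    submatrix_apply, submatrix_submatrix, Function.comp_apply, Fin.zero_succAbove,
    Fin.succ_succAbove_zero, Fin.succ_succAbove_succ, Fin.val_zero, Fin.val_succ,
    Matrix.cons_val', Matrix.cons_val_zero, Matrix.cons_val_succ, Matrix.head_cons,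
    Matrix.empty_val', Matrix.cons_val_fin_one, Matrix.head_fin_const,
    Finset.univ_unique, Finset.sum_singleton, Matrix.of_apply, pow_zero, pow_succ]
  norm_num
  ring

set_option maxHeartbeats 4000000 in
set_option maxRecDepth 40000 in
/-- The Frobenius form on `5A_α` with `(a_i,a_i) = 1`, `(a_i,a_j) = (3/32)(5α-1)` for
`i ≠ j` and `(a_i,s) = λ(1-β) - β` (`λ = 3(5α-1)/32`, `β = (5α-1)/8`) has Gram matrix of
determinant `-(5^6/2^36)(3α-7)^5(3α+1)^2(5α-1)`, and is positive definite exactly when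
`1/5 < α < 7/3`. -/
theorem fiveA_gram (α : ℝ)
    (hα0 : α ≠ 0) (hα5 : α ≠ 1 / 5) (hα2 : α ≠ 1 / 2) (hα1 : α ≠ 1) (hα9 : α ≠ 9 / 5)
    (B : (I5 → ℝ) →ₗ[ℝ] (I5 → ℝ) →ₗ[ℝ] ℝ)
    (hsymm : ∀ x y : I5 → ℝ, B x y = B y x)
    (hfrob : ∀ x y z : I5 → ℝ, B (mul5 ℝ α x y) z = B x (mul5 ℝ α y z))
    (hdiag : ∀ i : ZMod 5, B (e5 ℝ (some i)) (e5 ℝ (some i)) = 1)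
    (hoff : ∀ i j : ZMod 5, i ≠ j →
      B (e5 ℝ (some i)) (e5 ℝ (some j)) = 3 * (5 * α - 1) / 32)
    (hs : ∀ i : ZMod 5, B (e5 ℝ (some i)) (e5 ℝ none) =
      (3 * (5 * α - 1) / 32) * (1 - (5 * α - 1) / 8) - (5 * α - 1) / 8) :
    (Matrix.of fun i j : I5 => B (e5 ℝ i) (e5 ℝ j)).det =
      -(5 ^ 6 / 2 ^ 36) * (3 * α - 7) ^ 5 * (3 * α + 1) ^ 2 * (5 * α - 1) ∧
    ((∀ x : I5 → ℝ, x ≠ 0 → 0 < B x x) ↔ (1 / 5 < α ∧ α < 7 / 3)) := by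
  -- product of basis vectors a₀ a₁
  have p1 : mul5 ℝ α (e5 ℝ (some 0)) (e5 ℝ (some 1)) =
      ((5 * α - 1) / 8) • (e5 ℝ (some 0) + e5 ℝ (some 1)) + e5 ℝ none := by
    rw [mul5_basis]
    simp only [T5]
    rw [if_neg (show ¬(0 : ZMod 5) = 1 by decide),
        if_pos (show (1 : ZMod 5) - 0 = 1 ∨ (1 : ZMod 5) - 0 = 4 from Or.inl (by decide))]
  have p2 : mul5 ℝ α (e5 ℝ (some 1)) (e5 ℝ none) =
      ((1 - 5 * α) * (1 + 3 * α) / 64) • e5 ℝ (some 1)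
        - ((1 + 3 * α) * (1 - 5 * α) / 128) • (e5 ℝ (some 0) + e5 ℝ (some 2))
        + ((1 + 3 * α) / 8) • e5 ℝ none := by
    rw [mul5_basis]
    simp only [T5]
    rw [show (1 : ZMod 5) - 1 = 0 by decide, show (1 : ZMod 5) + 1 = 2 by decide]
  have hss : B (e5 ℝ none) (e5 ℝ none) = ((825 * α ^ 3 + 185 * α ^ 2 - 45 * α - 5) / 4096) := by
    have h := hfrob (e5 ℝ (some 0)) (e5 ℝ (some 1)) (e5 ℝ none)
    rw [p1, p2] at h
    simp only [map_add, map_smul, map_sub, LinearMap.add_apply, LinearMap.smul_apply,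
      LinearMap.sub_apply, smul_eq_mul] at h
    rw [hdiag 0, hs 0, hs 1, hoff 0 1 (by decide), hoff 0 2 (by decide)] at h
    linear_combination h
  have hval : ∀ i j : I5, B (e5 ℝ i) (e5 ℝ j) =
      !![1,(3 * (5 * α - 1) / 32),(3 * (5 * α - 1) / 32),(3 * (5 * α - 1) / 32),(3 * (5 * α - 1) / 32),(3 * (5 * α - 1) / 32 * (1 - (5 * α - 1) / 8) - (5 * α - 1) / 8); (3 * (5 * α - 1) / 32),1,(3 * (5 * α - 1) / 32),(3 * (5 * α - 1) / 32),(3 * (5 * α - 1) / 32),(3 * (5 * α - 1) / 32 * (1 - (5 * α - 1) / 8) - (5 * α - 1) / 8); (3 * (5 * α - 1) / 32),(3 * (5 * α - 1) / 32),1,(3 * (5 * α - 1) / 32),(3 * (5 * α - 1) / 32),(3 * (5 * α - 1) / 32 * (1 - (5 * α - 1) / 8) - (5 * α - 1) / 8);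
         (3 * (5 * α - 1) / 32),(3 * (5 * α - 1) / 32),(3 * (5 * α - 1) / 32),1,(3 * (5 * α - 1) / 32),(3 * (5 * α - 1) / 32 * (1 - (5 * α - 1) / 8) - (5 * α - 1) / 8); (3 * (5 * α - 1) / 32),(3 * (5 * α - 1) / 32),(3 * (5 * α - 1) / 32),(3 * (5 * α - 1) / 32),1,(3 * (5 * α - 1) / 32 * (1 - (5 * α - 1) / 8) - (5 * α - 1) / 8); (3 * (5 * α - 1) / 32 * (1 - (5 * α - 1) / 8) - (5 * α - 1) / 8),(3 * (5 * α - 1) / 32 * (1 - (5 * α - 1) / 8) - (5 * α - 1) / 8),(3 * (5 * α - 1) / 32 * (1 - (5 * α - 1) / 8) - (5 * α - 1) / 8),(3 * (5 * α - 1) / 32 * (1 - (5 * α - 1) / 8) - (5 * α - 1) / 8),(3 * (5 * α - 1) / 32 * (1 - (5 * α - 1) / 8) - (5 * α - 1) / 8),((825 * α ^ 3 + 185 * α ^ 2 - 45 * α - 5) / 4096)]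
        (eqv5 i) (eqv5 j) := by
    intro i j
    fin_cases i <;> fin_cases j <;>
      simp only [eqv5_none, eqv5_s0, eqv5_s1, eqv5_s2, eqv5_s3, eqv5_s4] <;>
      simp <;>
      first
        | exact hdiag _
        | exact hs _
        | exact (hsymm _ _).trans (hs _)
        | exact hss
        | (exact hoff _ _ (Fin.ne_of_val_ne (by decide)))
  have hBxx : ∀ x : I5 → ℝ, B x x = (x (some 0) ^ 2 + x (some 1) ^ 2 + x (some 2) ^ 2 + x (some 3) ^ 2 + x (some 4) ^ 2) + 2 * (3 * (5 * α - 1) / 32) * (x (some 0) * x (some 1) + x (some 0) * x (some 2) + x (some 0) * x (some 3) + x (some 0) * x (some 4) + x (some 1) * x (some 2) + x (some 1) * x (some 3) + x (some 1) * x (some 4) + x (some 2) * x (some 3) + x (some 2) * x (some 4) + x (some 3) * x (some 4)) + 2 * (3 * (5 * α - 1) / 32 * (1 - (5 * α - 1) / 8) - (5 * α - 1) / 8) * (x none) * (x (some 0) + x (some 1) + x (some 2) + x (some 3) + x (some 4)) + ((825 * α ^ 3 + 185 * α ^ 2 - 45 * α - 5) / 4096) * (x none) ^ 2 := by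
    intro x
    conv_lhs => rw [decomp5 ℝ x]
    simp only [map_sum, LinearMap.sum_apply, map_smul, LinearMap.smul_apply, smul_eq_mul]
    simp only [sum_I5']
    simp only [hval]
    simp only [eqv5_none, eqv5_s0, eqv5_s1, eqv5_s2, eqv5_s3, eqv5_s4]
    simp
    ring
  constructor
  · -- determinant
    have hM : (Matrix.of fun i j : I5 => B (e5 ℝ i) (e5 ℝ j)) =
        (!![1,(3 * (5 * α - 1) / 32),(3 * (5 * α - 1) / 32),(3 * (5 * α - 1) / 32),(3 * (5 * α - 1) / 32),(3 * (5 * α - 1) / 32 * (1 - (5 * α - 1) / 8) - (5 * α - 1) / 8); (3 * (5 * α - 1) / 32),1,(3 * (5 * α - 1) / 32),(3 * (5 * α - 1) / 32),(3 * (5 * α - 1) / 32),(3 * (5 * α - 1) / 32 * (1 - (5 * α - 1) / 8) - (5 * α - 1) / 8); (3 * (5 * α - 1) / 32),(3 * (5 * α - 1) / 32),1,(3 * (5 * α - 1) / 32),(3 * (5 * α - 1) / 32),(3 * (5 * α - 1) / 32 * (1 - (5 * α - 1) / 8) - (5 * α - 1) / 8);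
           (3 * (5 * α - 1) / 32),(3 * (5 * α - 1) / 32),(3 * (5 * α - 1) / 32),1,(3 * (5 * α - 1) / 32),(3 * (5 * α - 1) / 32 * (1 - (5 * α - 1) / 8) - (5 * α - 1) / 8); (3 * (5 * α - 1) / 32),(3 * (5 * α - 1) / 32),(3 * (5 * α - 1) / 32),(3 * (5 * α - 1) / 32),1,(3 * (5 * α - 1) / 32 * (1 - (5 * α - 1) / 8) - (5 * α - 1) / 8); (3 * (5 * α - 1) / 32 * (1 - (5 * α - 1) / 8) - (5 * α - 1) / 8),(3 * (5 * α - 1) / 32 * (1 - (5 * α - 1) / 8) - (5 * α - 1) / 8),(3 * (5 * α - 1) / 32 * (1 - (5 * α - 1) / 8) - (5 * α - 1) / 8),(3 * (5 * α - 1) / 32 * (1 - (5 * α - 1) / 8) - (5 * α - 1) / 8),(3 * (5 * α - 1) / 32 * (1 - (5 * α - 1) / 8) - (5 * α - 1) / 8),((825 * α ^ 3 + 185 * α ^ 2 - 45 * α - 5) / 4096)]).submatrix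
          eqv5 eqv5 := by
      ext i j
      exact hval i j
    rw [hM, Matrix.det_submatrix_equiv_self, det6']
    ring
  · constructor
    · -- positive definite → bounds
      intro hP
      set v1 : I5 → ℝ := fun k => Option.elim k 0 (fun j => if j = 0 then 1 else if j = 1 then -1 else 0) with hv1def
      have hv1c : ∀ j : ZMod 5, v1 (some j) =
          (if j = 0 then (1:ℝ) else if j = 1 then -1 else 0) := by
        rw [hv1def]; intro j; rfl
      have hv1c0 : v1 (some 0) = 1 := by rw [hv1c 0, if_pos rfl]
      have hv1c1 : v1 (some 1) = -1 := by
        rw [hv1c 1, if_neg (by decide), if_pos rfl]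
      have hv1c2 : v1 (some 2) = 0 := by
        rw [hv1c 2, if_neg (by decide), if_neg (by decide)]
      have hv1c3 : v1 (some 3) = 0 := by
        rw [hv1c 3, if_neg (by decide), if_neg (by decide)]
      have hv1c4 : v1 (some 4) = 0 := by
        rw [hv1c 4, if_neg (by decide), if_neg (by decide)]
      have hv1cn : v1 none = 0 := by rw [hv1def]; rfl
      have hv1ne : v1 ≠ 0 := by
        intro h
        have h0 := congrFun h (some 0)
        rw [hv1c0] at h0
        exact one_ne_zero h0
      have hQ1 := hP v1 hv1ne
      rw [hBxx v1, hv1c0, hv1c1, hv1c2, hv1c3, hv1c4, hv1cn] at hQ1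
      have hc1 : α < 7 / 3 := by linarith [hQ1]
      set v2 : I5 → ℝ := fun k => Option.elim k 0 (fun _ => 1) with hv2def
      have hv2c0' : v2 (some 0) = 1 := by rw [hv2def]; rfl
      have hv2ne : v2 ≠ 0 := by
        intro h
        have h0 := congrFun h (some 0)
        rw [hv2c0'] at h0
        exact one_ne_zero h0
      have hQ2 := hP v2 hv2ne
      rw [hBxx v2] at hQ2
      have hv2c : ∀ j : ZMod 5, v2 (some j) = 1 := by rw [hv2def]; intro j; rfl
      have hv2cn : v2 none = 0 := by rw [hv2def]; rfl
      rw [hv2c 0, hv2c 1, hv2c 2, hv2c 3, hv2c 4, hv2cn] at hQ2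
      have hK : (0:ℝ) < (5 * (1 + 3 * α) / 8) := by nlinarith [hQ2]
      set v3 : I5 → ℝ := fun k => Option.elim k (5 * (1 + 3 * α) / 8) (fun _ => -(3 * (5 * α - 1) / 32 * (1 - (5 * α - 1) / 8) - (5 * α - 1) / 8)) with hv3def
      have hv3cn' : v3 none = (5 * (1 + 3 * α) / 8) := by rw [hv3def]; rfl
      have hv3ne : v3 ≠ 0 := by
        intro h
        have h0 := congrFun h none
        rw [hv3cn'] at h0
        exact absurd h0 (ne_of_gt hK)
      have hQ3 := hP v3 hv3ne
      rw [hBxx v3] at hQ3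
      have hv3c : ∀ j : ZMod 5, v3 (some j) = -(3 * (5 * α - 1) / 32 * (1 - (5 * α - 1) / 8) - (5 * α - 1) / 8) := by rw [hv3def]; intro j; rfl
      have hv3cn : v3 none = (5 * (1 + 3 * α) / 8) := by rw [hv3def]; rfl
      rw [hv3c 0, hv3c 1, hv3c 2, hv3c 3, hv3c 4, hv3cn] at hQ3
      have hKm : (0:ℝ) < (5 * (1 + 3 * α) / 8) * (25 / 65536 * ((7 - 3 * α) * ((3 * α + 1) ^ 2 * (5 * α - 1)))) := by linarith [hQ3]
      have hm : (0:ℝ) < (25 / 65536 * ((7 - 3 * α) * ((3 * α + 1) ^ 2 * (5 * α - 1)))) := by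
        by_contra hle
        push_neg at hle
        linarith [hKm, mul_nonpos_of_nonneg_of_nonpos hK.le hle]
      have hc5 : 1 / 5 < α := by
        by_contra h
        push_neg at h
        have h75 : (0:ℝ) ≤ 7 - 3 * α := by linarith
        have h15 : (0:ℝ) ≤ 1 - 5 * α := by linarith
        linarith [hm, mul_nonneg (mul_nonneg h75 (sq_nonneg (3 * α + 1))) h15]
      exact ⟨hc5, hc1⟩
    · -- bounds → positive definite
      rintro ⟨hl, hr⟩ x hx0
      obtain ⟨k, hk⟩ := Function.ne_iff.mp hx0
      have hKpos : (0:ℝ) < (5 * (1 + 3 * α) / 8) := by linarith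
      have h1c : (0:ℝ) < 1 - (3 * (5 * α - 1) / 32) := by linarith
      have hm : (0:ℝ) < (25 / 65536 * ((7 - 3 * α) * ((3 * α + 1) ^ 2 * (5 * α - 1)))) := by
        have f1 : (0:ℝ) < 7 - 3 * α := by linarith
        have f2 : (0:ℝ) < (3 * α + 1) ^ 2 := by positivity
        have f3 : (0:ℝ) < 5 * α - 1 := by linarith
        exact mul_pos (by norm_num) (mul_pos f1 (mul_pos f2 f3))
      have hid : 5 * (5 * (1 + 3 * α) / 8) * (B x x) =
          (5 * (1 + 3 * α) / 8) * (1 - (3 * (5 * α - 1) / 32)) * ((x (some 0) - x (some 1)) ^ 2 + (x (some 0) - x (some 2)) ^ 2 + (x (some 0) - x (some 3)) ^ 2 + (x (some 0) - x (some 4)) ^ 2 + (x (some 1) - x (some 2)) ^ 2 + (x (some 1) - x (some 3)) ^ 2 + (x (some 1) - x (some 4)) ^ 2 + (x (some 2) - x (some 3)) ^ 2 + (x (some 2) - x (some 4)) ^ 2 + (x (some 3) - x (some 4)) ^ 2)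
          + ((5 * (1 + 3 * α) / 8) * (x (some 0) + x (some 1) + x (some 2) + x (some 3) + x (some 4)) + 5 * (3 * (5 * α - 1) / 32 * (1 - (5 * α - 1) / 8) - (5 * α - 1) / 8) * (x none)) ^ 2
          + 5 * (25 / 65536 * ((7 - 3 * α) * ((3 * α + 1) ^ 2 * (5 * α - 1)))) * (x none) ^ 2 := by
        rw [hBxx x]
        ring
      have hS1 : (0:ℝ) ≤ (x (some 0) - x (some 1)) ^ 2 + (x (some 0) - x (some 2)) ^ 2 + (x (some 0) - x (some 3)) ^ 2 + (x (some 0) - x (some 4)) ^ 2 + (x (some 1) - x (some 2)) ^ 2 + (x (some 1) - x (some 3)) ^ 2 + (x (some 1) - x (some 4)) ^ 2 + (x (some 2) - x (some 3)) ^ 2 + (x (some 2) - x (some 4)) ^ 2 + (x (some 3) - x (some 4)) ^ 2 := by positivity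
      have hfin : (0:ℝ) < 5 * (5 * (1 + 3 * α) / 8) * (B x x) := by
        by_cases ht : x none = 0
        · rw [ht] at hid
          by_cases hall : x (some 1) = x (some 0) ∧ x (some 2) = x (some 0) ∧
              x (some 3) = x (some 0) ∧ x (some 4) = x (some 0)
          · obtain ⟨h1, h2, h3, h4⟩ := hall
            have hxz : x (some 0) ≠ 0 := by
              intro h0
              apply hk
              cases k with
              | none => exact ht
              | some j =>
                fin_cases j <;>
                  first
                    | exact h0
                    | exact h1.trans h0
                    | exact h2.trans h0
                    | exact h3.trans h0
                    | exact h4.trans h0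
            rw [h1, h2, h3, h4] at hid
            have hb : (5 * (1 + 3 * α) / 8) * (x (some 0) + x (some 0) + x (some 0) + x (some 0) + x (some 0))
                + 5 * (3 * (5 * α - 1) / 32 * (1 - (5 * α - 1) / 8) - (5 * α - 1) / 8) * 0 ≠ 0 := by
              have : (5 * (1 + 3 * α) / 8) * (x (some 0) + x (some 0) + x (some 0) + x (some 0) + x (some 0))
                  + 5 * (3 * (5 * α - 1) / 32 * (1 - (5 * α - 1) / 8) - (5 * α - 1) / 8) * 0 = 5 * ((5 * (1 + 3 * α) / 8)) * x (some 0) := by ring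
              rw [this]
              exact mul_ne_zero (mul_ne_zero (by norm_num) (ne_of_gt hKpos)) hxz
            have hbsq : (0:ℝ) < ((5 * (1 + 3 * α) / 8) * (x (some 0) + x (some 0) + x (some 0) + x (some 0) + x (some 0))
                + 5 * (3 * (5 * α - 1) / 32 * (1 - (5 * α - 1) / 8) - (5 * α - 1) / 8) * 0) ^ 2 :=
              lt_of_le_of_ne (sq_nonneg _) (Ne.symm (pow_ne_zero 2 hb))
            linarith [hid, hbsq, mul_nonneg (mul_nonneg hKpos.le h1c.le)
              (show (0:ℝ) ≤ (x (some 0) - x (some 0)) ^ 2 + (x (some 0) - x (some 0)) ^ 2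
                + (x (some 0) - x (some 0)) ^ 2 + (x (some 0) - x (some 0)) ^ 2
                + (x (some 0) - x (some 0)) ^ 2 + (x (some 0) - x (some 0)) ^ 2
                + (x (some 0) - x (some 0)) ^ 2 + (x (some 0) - x (some 0)) ^ 2
                + (x (some 0) - x (some 0)) ^ 2 + (x (some 0) - x (some 0)) ^ 2 by positivity)]
          · have hor : x (some 1) ≠ x (some 0) ∨ x (some 2) ≠ x (some 0) ∨
                x (some 3) ≠ x (some 0) ∨ x (some 4) ≠ x (some 0) := by tauto
            have hS1pos : (0:ℝ) < (x (some 0) - x (some 1)) ^ 2 + (x (some 0) - x (some 2)) ^ 2 + (x (some 0) - x (some 3)) ^ 2 + (x (some 0) - x (some 4)) ^ 2 + (x (some 1) - x (some 2)) ^ 2 + (x (some 1) - x (some 3)) ^ 2 + (x (some 1) - x (some 4)) ^ 2 + (x (some 2) - x (some 3)) ^ 2 + (x (some 2) - x (some 4)) ^ 2 + (x (some 3) - x (some 4)) ^ 2 := by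
              have key : ∀ a b : ℝ, a ≠ b → (0:ℝ) < (b - a) ^ 2 := fun a b hab =>
                lt_of_le_of_ne (sq_nonneg _) (Ne.symm (pow_ne_zero 2 (sub_ne_zero.mpr (Ne.symm hab))))
              rcases hor with h | h | h | h
              · linarith [key _ _ h, sq_nonneg (x (some 0) - x (some 2)), sq_nonneg (x (some 0) - x (some 3)), sq_nonneg (x (some 0) - x (some 4)), sq_nonneg (x (some 1) - x (some 2)), sq_nonneg (x (some 1) - x (some 3)), sq_nonneg (x (some 1) - x (some 4)), sq_nonneg (x (some 2) - x (some 3)), sq_nonneg (x (some 2) - x (some 4)), sq_nonneg (x (some 3) - x (some 4))]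
              · linarith [key _ _ h, sq_nonneg (x (some 0) - x (some 1)), sq_nonneg (x (some 0) - x (some 3)), sq_nonneg (x (some 0) - x (some 4)), sq_nonneg (x (some 1) - x (some 2)), sq_nonneg (x (some 1) - x (some 3)), sq_nonneg (x (some 1) - x (some 4)), sq_nonneg (x (some 2) - x (some 3)), sq_nonneg (x (some 2) - x (some 4)), sq_nonneg (x (some 3) - x (some 4))]
              · linarith [key _ _ h, sq_nonneg (x (some 0) - x (some 1)), sq_nonneg (x (some 0) - x (some 2)), sq_nonneg (x (some 0) - x (some 4)), sq_nonneg (x (some 1) - x (some 2)), sq_nonneg (x (some 1) - x (some 3)), sq_nonneg (x (some 1) - x (some 4)), sq_nonneg (x (some 2) - x (some 3)), sq_nonneg (x (some 2) - x (some 4)), sq_nonneg (x (some 3) - x (some 4))]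
              · linarith [key _ _ h, sq_nonneg (x (some 0) - x (some 1)), sq_nonneg (x (some 0) - x (some 2)), sq_nonneg (x (some 0) - x (some 3)), sq_nonneg (x (some 1) - x (some 2)), sq_nonneg (x (some 1) - x (some 3)), sq_nonneg (x (some 1) - x (some 4)), sq_nonneg (x (some 2) - x (some 3)), sq_nonneg (x (some 2) - x (some 4)), sq_nonneg (x (some 3) - x (some 4))]
            linarith [hid, mul_pos (mul_pos hKpos h1c) hS1pos,
              sq_nonneg ((5 * (1 + 3 * α) / 8) * (x (some 0) + x (some 1) + x (some 2) + x (some 3) + x (some 4)) + 5 * (3 * (5 * α - 1) / 32 * (1 - (5 * α - 1) / 8) - (5 * α - 1) / 8) * 0)]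
        · have ht2 : (0:ℝ) < (x none) ^ 2 :=
            lt_of_le_of_ne (sq_nonneg _) (Ne.symm (pow_ne_zero 2 ht))
          linarith [hid, mul_pos (mul_pos (show (0:ℝ) < 5 by norm_num) hm) ht2,
            mul_nonneg (mul_nonneg hKpos.le h1c.le) hS1,
            sq_nonneg ((5 * (1 + 3 * α) / 8) * (x (some 0) + x (some 1) + x (some 2) + x (some 3) + x (some 4)) + 5 * (3 * (5 * α - 1) / 32 * (1 - (5 * α - 1) / 8) - (5 * α - 1) / 8) * (x none))]
      by_contra hle
      push_neg at hle
      have : 5 * (5 * (1 + 3 * α) / 8) * (B x x) ≤ 0 :=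
        mul_nonpos_of_nonneg_of_nonpos (by linarith) hle
      linarith
end
end
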